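/- arXiv:2007.00150 — 2 statements merged into one kernel-verified Lean document; each statement's English description precedes it below -/
import Mathlib

section
/- Under the linear regression model y_i = x_iᵀβ_0 + σ_0 ε_i with ε_i i.i.d. with continuous distribution function G_0 symmetric around 0 and independent of the covariates x_i, and with estimators satisfying β̂ → β_0 and σ̂ → σ_0 > 0 almost surely, the empirical distribution function of the absolute standardized residuals, G_n^+(t) = (1/n) Σ_{i=1}^n 1{ |y_i − x_iᵀβ̂| / σ̂ ≤ t }, satisfies sup_{t≥0} |G_n^+(t) − G_0^+(t)| → 0 almost surely, where G_0^+ is the distribution function of |ε_1|. -/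
open MeasureTheory ProbabilityTheory Filter Set
open scoped Topology

lemma slln_indicator {Ω : Type*} [MeasurableSpace Ω] (P : Measure Ω) [IsProbabilityMeasure P]
    {E : Type*} [MeasurableSpace E] (Z : ℕ → Ω → E)
    (hZ : ∀ i, Measurable (Z i))
    (hindep : iIndepFun Z P)
    (hident : ∀ i, IdentDistrib (Z i) (Z 0) P P)
    (S : Set E) (hS : MeasurableSet S) :
    ∀ᵐ ω ∂P, Tendsto
      (fun n => (∑ i ∈ Finset.range n, S.indicator (fun _ => (1:ℝ)) (Z i ω)) / n)
      atTop (𝓝 ((P (Z 0 ⁻¹' S)).toReal)) := by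
  set f : E → ℝ := S.indicator (fun _ => (1:ℝ)) with hf
  have hfm : Measurable f := measurable_const.indicator hS
  set X : ℕ → Ω → ℝ := fun i ω => f (Z i ω) with hX
  have hXind : X 0 = (Z 0 ⁻¹' S).indicator (fun _ => (1:ℝ)) := by
    ext ω; by_cases h : Z 0 ω ∈ S <;> simp [X, f, Set.indicator, h, Set.mem_preimage]
  have hint : Integrable (X 0) P := by
    rw [hXind]
    exact (integrable_indicator_iff (hS.preimage (hZ 0))).2
      (integrableOn_const (measure_ne_top _ _))
  have hpind : Pairwise (Function.onFun (IndepFun · · P) X) := by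
    intro i j hij
    exact (hindep.comp (fun _ => f) (fun _ => hfm)).indepFun hij
  have hpid : ∀ i, IdentDistrib (X i) (X 0) P P :=
    fun i => (hident i).comp hfm
  have hmean : P[X 0] = (P (Z 0 ⁻¹' S)).toReal := by
    rw [hXind]
    have := integral_indicator_one (μ := P) (hS.preimage (hZ 0))
    exact this
  have := strong_law_ae_real X hint hpind hpid
  rw [hmean] at this
  exact this


lemma ind_le_ind_add_ind {A B C : Prop} [Decidable A] [Decidable B] [Decidable C]
    (h : A → B ∨ C) :
    (if A then (1:ℝ) else 0) ≤ (if B then (1:ℝ) else 0) + (if C then (1:ℝ) else 0) := by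
  split_ifs <;> simp_all <;> tauto

lemma ind_mono {A B : Prop} [Decidable A] [Decidable B] (h : A → B) :
    (if A then (1:ℝ) else 0) ≤ if B then (1:ℝ) else 0 := by
  split_ifs <;> simp_all

lemma det_bound
    (n : ℕ) (hn1 : 1 ≤ n)
    (u v w : ℕ → ℝ) (hw : ∀ i, 0 ≤ w i)
    (σ0 σh δ η M q ρ ρb : ℝ) (K : ℕ)
    (hσ0 : 0 < σ0) (hσh : 0 < σh) (hδ0 : 0 < δ) (hη : 0 < η)
    (hM : 0 ≤ M) (hq1 : 1 ≤ q) (hρ0 : 0 < ρ) (hρ1 : ρ ≤ 1) (hρb2 : 2 * ρ < ρb)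
    (hK1 : 1 ≤ K) (hmesh : q / K ≤ ρ)
    (hσd : |σh - σ0| ≤ δ)
    (hδκ : δ * q + M * δ ≤ σ0 * ρ) (hδσ : δ ≤ σ0)
    (hmodel : ∀ i, |u i - σ0 * v i| ≤ w i * δ)
    (F : ℝ → ℝ) (hFmono : Monotone F) (hFle1 : ∀ t, F t ≤ 1) (hFq : 1 - η ≤ F q)
    (hucF : ∀ s ∈ Icc (-1:ℝ) (q+1), ∀ t ∈ Icc (-1:ℝ) (q+1),
      |s - t| < ρb → |F s - F t| ≤ η)
    (hE : ∀ j, j < K →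
      |(∑ i ∈ Finset.range n, if |v i| ≤ ((j:ℝ)+1) * q / K + ρ then (1:ℝ) else 0) / n
        - F (((j:ℝ)+1) * q / K + ρ)| ≤ η
      ∧ |(∑ i ∈ Finset.range n, if |v i| ≤ (j:ℝ) * q / K - ρ then (1:ℝ) else 0) / n
        - F ((j:ℝ) * q / K - ρ)| ≤ η)
    (hA : (∑ i ∈ Finset.range n, if M < w i then (1:ℝ) else 0) / n ≤ 2 * η) :
    ∀ t : ℝ, 0 ≤ t →
      |(∑ i ∈ Finset.range n, if |u i| / σh ≤ t then (1:ℝ) else 0) / n - F t| ≤ 5 * η := by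
  have hn0 : (0:ℝ) < (n:ℝ) := by exact_mod_cast hn1
  have hq0 : (0:ℝ) < q := lt_of_lt_of_le one_pos hq1
  have hK0 : (0:ℝ) < (K:ℝ) := by exact_mod_cast hK1
  have hσn' := abs_le.1 hσd
  set Gf : ℝ → ℝ := fun t =>
    (∑ i ∈ Finset.range n, if |u i| / σh ≤ t then (1:ℝ) else 0) / n with hGf
  set ef : ℝ → ℝ := fun s =>
    (∑ i ∈ Finset.range n, if |v i| ≤ s then (1:ℝ) else 0) / n with hef
  set af : ℝ := (∑ i ∈ Finset.range n, if M < w i then (1:ℝ) else 0) / n with haf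
  set g : ℕ → ℝ := fun j => (j:ℝ) * q / K with hgdef
  have hg_mono : ∀ j1 j2 : ℕ, j1 ≤ j2 → g j1 ≤ g j2 := by
    intro j1 j2 h
    simp only [hgdef]
    exact (div_le_div_iff_of_pos_right hK0).2
      (mul_le_mul_of_nonneg_right (by exact_mod_cast h) hq0.le)
  have hgK : g K = q := by
    simp only [hgdef]; field_simp
  have hAf : af ≤ 2 * η := hA
  have hGmono : Monotone Gf := by
    intro t1 t2 h12
    simp only [hGf]
    exact (div_le_div_iff_of_pos_right hn0).2
      (Finset.sum_le_sum (fun i _ => ind_mono (fun hA' => le_trans hA' h12)))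
  have hGle1 : ∀ t, Gf t ≤ 1 := by
    intro t
    simp only [hGf]
    rw [div_le_one hn0]
    calc (∑ i ∈ Finset.range n, if |u i| / σh ≤ t then (1:ℝ) else 0)
        ≤ ∑ _i ∈ Finset.range n, (1:ℝ) :=
          Finset.sum_le_sum (fun i _ => by split_ifs <;> norm_num)
      _ = n := by simp
  have hup : ∀ t s : ℝ, σh * t + M * δ ≤ σ0 * s → Gf t ≤ ef s + af := by
    intro t s hts
    have key : ∀ i, (if |u i| / σh ≤ t then (1:ℝ) else 0)
        ≤ (if |v i| ≤ s then (1:ℝ) else 0) + (if M < w i then (1:ℝ) else 0) := by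
      intro i
      apply ind_le_ind_add_ind
      intro hr
      by_cases hxb : M < w i
      · exact Or.inr hxb
      · left
        push_neg at hxb
        have hb' : |u i - σ0 * v i| ≤ M * δ :=
          le_trans (hmodel i) (mul_le_mul_of_nonneg_right hxb hδ0.le)
        have h1 : |u i| ≤ σh * t := by
          rw [div_le_iff₀ hσh] at hr
          calc |u i| ≤ t * σh := hr
            _ = σh * t := mul_comm _ _
        have h2 : |σ0 * v i| ≤ σh * t + M * δ := by
          have habs : |σ0 * v i| ≤ |u i| + |u i - σ0 * v i| := by
            calc |σ0 * v i| = |u i - (u i - σ0 * v i)| := by congr 1; ring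
              _ ≤ |u i| + |u i - σ0 * v i| := abs_sub _ _
          linarith
        have h3 : |σ0 * v i| ≤ σ0 * s := by linarith
        have h4 : σ0 * |v i| ≤ σ0 * s := by rwa [abs_mul, abs_of_pos hσ0] at h3
        exact le_of_mul_le_mul_left h4 hσ0
    simp only [hGf, hef, haf]
    rw [← add_div, ← Finset.sum_add_distrib]
    exact (div_le_div_iff_of_pos_right hn0).2 (Finset.sum_le_sum (fun i _ => key i))
  have hlow : ∀ t s : ℝ, σ0 * s + M * δ ≤ σh * t → ef s ≤ Gf t + af := by
    intro t s hts
    have key : ∀ i, (if |v i| ≤ s then (1:ℝ) else 0)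
        ≤ (if |u i| / σh ≤ t then (1:ℝ) else 0) + (if M < w i then (1:ℝ) else 0) := by
      intro i
      apply ind_le_ind_add_ind
      intro hr
      by_cases hxb : M < w i
      · exact Or.inr hxb
      · left
        push_neg at hxb
        have hb' : |u i - σ0 * v i| ≤ M * δ :=
          le_trans (hmodel i) (mul_le_mul_of_nonneg_right hxb hδ0.le)
        have h0 : |σ0 * v i| ≤ σ0 * s := by
          rw [abs_mul, abs_of_pos hσ0]
          exact mul_le_mul_of_nonneg_left hr hσ0.le
        have h1 : |u i| ≤ σh * t := by
          have habs : |u i| ≤ |σ0 * v i| + |u i - σ0 * v i| := by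
            calc |u i| = |σ0 * v i + (u i - σ0 * v i)| := by congr 1; ring
              _ ≤ |σ0 * v i| + |u i - σ0 * v i| := abs_add_le _ _
          linarith
        rw [div_le_iff₀ hσh]
        calc |u i| ≤ σh * t := h1
          _ = t * σh := mul_comm _ _
    simp only [hGf, hef, haf]
    rw [← add_div, ← Finset.sum_add_distrib]
    exact (div_le_div_iff_of_pos_right hn0).2 (Finset.sum_le_sum (fun i _ => key i))
  -- the bucket estimate on [0, q]
  have hbucket : ∀ t : ℝ, 0 ≤ t → t ≤ q → |Gf t - F t| ≤ 4 * η := by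
    intro t ht0 htq
    obtain ⟨j, hjK, hgj, hgj1⟩ : ∃ j : ℕ, j < K ∧ g j ≤ t ∧ t ≤ g (j+1) := by
      refine ⟨min ⌊t * K / q⌋₊ (K-1), ?_, ?_, ?_⟩
      · exact lt_of_le_of_lt (min_le_right _ _)
          (Nat.sub_lt (lt_of_lt_of_le one_pos hK1) one_pos)
      · simp only [hgdef]
        rw [div_le_iff₀ hK0]
        have hj_le : ((min ⌊t * K / q⌋₊ (K-1) : ℕ) : ℝ) ≤ t * K / q :=
          le_trans (by exact_mod_cast min_le_left _ _) (Nat.floor_le (by positivity))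
        calc ((min ⌊t * K / q⌋₊ (K-1) : ℕ) : ℝ) * q ≤ (t * K / q) * q :=
              mul_le_mul_of_nonneg_right hj_le hq0.le
          _ = t * K := by field_simp
      · by_cases hcase : ⌊t * K / q⌋₊ ≤ K - 1
        · rw [min_eq_left hcase]
          simp only [hgdef]
          rw [le_div_iff₀ hK0]
          have hfl : t * K / q < (⌊t * K / q⌋₊ : ℝ) + 1 := Nat.lt_floor_add_one _
          calc t * K = (t * K / q) * q := by field_simp
            _ ≤ ((⌊t * K / q⌋₊ : ℝ) + 1) * q :=
                mul_le_mul_of_nonneg_right hfl.le hq0.le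
            _ = ((⌊t * K / q⌋₊ + 1 : ℕ) : ℝ) * q := by push_cast; ring
        · rw [min_eq_right (le_of_not_ge hcase)]
          simp only [hgdef]
          have hK1' : K - 1 + 1 = K := Nat.succ_pred_eq_of_pos (lt_of_lt_of_le one_pos hK1)
          rw [hK1', le_div_iff₀ hK0]
          calc t * K ≤ q * K := mul_le_mul_of_nonneg_right htq hK0.le
            _ = (K:ℝ) * q := mul_comm _ _
    have hgj1q : g (j+1) ≤ q := by
      calc g (j+1) ≤ g K := hg_mono _ _ hjK
        _ = q := hgK
    have hgj0 : 0 ≤ g j := by simp only [hgdef]; positivity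
    have hgjq : g j ≤ q := le_trans hgj htq
    have hmesh' : g (j+1) - g j ≤ ρ := by
      have hd : g (j+1) - g j = q / K := by
        simp only [hgdef]; push_cast; field_simp; ring
      rw [hd]; exact hmesh
    -- upper estimate
    have hup1 : σh * t + M * δ ≤ σ0 * (g (j+1) + ρ) := by
      have hσle : σh ≤ σ0 + δ := by linarith [hσn'.2]
      have ht1 : σh * t ≤ (σ0 + δ) * t := mul_le_mul_of_nonneg_right hσle ht0
      have hp1 : σ0 * t ≤ σ0 * g (j+1) := mul_le_mul_of_nonneg_left hgj1 hσ0.le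
      have hp2 : δ * t ≤ δ * q := mul_le_mul_of_nonneg_left htq hδ0.le
      have ht2 : (σ0 + δ) * t ≤ σ0 * g (j+1) + δ * q := by ring_nf; ring_nf at hp1 hp2; linarith
      linarith
    have hGup : Gf t ≤ ef (g (j+1) + ρ) + af := hup t _ hup1
    have hEj : |ef (((j:ℝ)+1) * q / K + ρ) - F (((j:ℝ)+1) * q / K + ρ)| ≤ η := (hE j hjK).1
    have hgj1e : g (j+1) = ((j:ℝ)+1) * q / K := by simp only [hgdef]; push_cast; ring
    rw [← hgj1e] at hEj
    have hsmem : g (j+1) + ρ ∈ Icc (-1:ℝ) (q+1) := by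
      constructor
      · have : (0:ℝ) ≤ g (j+1) := le_trans hgj0 (hg_mono j (j+1) (Nat.le_succ j))
        linarith
      · linarith
    have htmem : t ∈ Icc (-1:ℝ) (q+1) := ⟨by linarith, by linarith⟩
    have hFj : |F (g (j+1) + ρ) - F t| ≤ η := by
      apply hucF _ hsmem _ htmem
      have habs : |g (j+1) + ρ - t| ≤ 2 * ρ := by
        rw [abs_le]
        constructor
        · linarith
        · linarith [hmesh', hgj]
      linarith [habs]
    have hupper : Gf t - F t ≤ 4 * η := by
      have e1 := abs_le.1 hEj
      have e2 := abs_le.1 hFj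
      linarith [hGup, hAf, e1.2, e2.2, e1.1, e2.1]
    -- lower estimate
    have hlow1 : σ0 * (g j - ρ) + M * δ ≤ σh * t := by
      have hσge : σ0 - δ ≤ σh := by linarith [hσn'.1]
      have ht1 : (σ0 - δ) * t ≤ σh * t := mul_le_mul_of_nonneg_right hσge ht0
      have ht2 : (σ0 - δ) * (g j) ≤ (σ0 - δ) * t :=
        mul_le_mul_of_nonneg_left hgj (by linarith)
      have hp1 : δ * g j ≤ δ * q := mul_le_mul_of_nonneg_left hgjq hδ0.le
      have ht3 : σ0 * g j - δ * q ≤ (σ0 - δ) * g j := by ring_nf; ring_nf at hp1; linarith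
      have hexp1 : (σ0 - δ) * g j ≤ (σ0 - δ) * t := ht2
      have hexp2 : σ0 * (g j - ρ) = σ0 * g j - σ0 * ρ := by ring
      have hexp3 : (σ0 - δ) * t ≤ σh * t := ht1
      rw [hexp2]
      linarith
    have hGlow : ef (g j - ρ) ≤ Gf t + af := hlow t _ hlow1
    have hEj' : |ef ((j:ℝ) * q / K - ρ) - F ((j:ℝ) * q / K - ρ)| ≤ η := (hE j hjK).2
    have hgje : g j = (j:ℝ) * q / K := by simp only [hgdef]
    rw [← hgje] at hEj'
    have hsmem' : g j - ρ ∈ Icc (-1:ℝ) (q+1) := ⟨by linarith, by linarith⟩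
    have hFj' : |F (g j - ρ) - F t| ≤ η := by
      apply hucF _ hsmem' _ htmem
      have habs : |g j - ρ - t| ≤ 2 * ρ := by
        rw [abs_le]
        constructor
        · linarith [hmesh', hgj1]
        · linarith
      linarith [habs]
    have hlower : F t - Gf t ≤ 4 * η := by
      have e1 := abs_le.1 hEj'
      have e2 := abs_le.1 hFj'
      linarith [hGlow, hAf, e1.2, e2.2, e1.1, e2.1]
    exact abs_le.2 ⟨by linarith, by linarith⟩
  -- all t ≥ 0
  intro t ht0
  show |Gf t - F t| ≤ 5 * η
  by_cases htq : t ≤ q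
  · exact le_trans (hbucket t ht0 htq) (by linarith)
  · push_neg at htq
    have hGq := abs_le.1 (hbucket q hq0.le (le_refl q))
    have h1 : F q - 4 * η ≤ Gf q := by linarith [hGq.1]
    have h2 : Gf q ≤ Gf t := hGmono (le_of_lt htq)
    have h3 : F q ≤ F t := hFmono (le_of_lt htq)
    have h4 := hFle1 t
    have h5 := hGle1 t
    rw [abs_le]
    constructor
    · linarith
    · linarith


/-- Lemma B.2 (a): under the linear regression model, the empirical
distribution function of the absolute standardized residuals converges uniformly, almost
surely, to the distribution function of the absolute errors. -/
theorem absResiduals_empCDF_uniform_consistency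
    {Ω : Type*} [MeasurableSpace Ω] (P : Measure Ω) [IsProbabilityMeasure P]
    {p : ℕ}
    -- the observations and errors
    (x : ℕ → Ω → EuclideanSpace ℝ (Fin p)) (ε : ℕ → Ω → ℝ) (y : ℕ → Ω → ℝ)
    (hx_meas : ∀ i, Measurable (x i)) (hε_meas : ∀ i, Measurable (ε i))
    -- the linear model
    (β0 : EuclideanSpace ℝ (Fin p)) (σ0 : ℝ) (hσ0 : 0 < σ0)
    (hmod : ∀ i ω, y i ω = (∑ j, x i ω j * β0 j) + σ0 * ε i ω)
    -- (ε_i, x_i) are i.i.d., with ε_i independent of x_i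
    (hindep : iIndepFun (fun i ω => (ε i ω, x i ω)) P)
    (hident : ∀ i, IdentDistrib (fun ω => (ε i ω, x i ω)) (fun ω => (ε 0 ω, x 0 ω)) P P)
    (hεx : ∀ i, IndepFun (ε i) (x i) P)
    -- G₀ is the continuous distribution function of the errors, symmetric around 0
    (G0 : ℝ → ℝ)
    (hG0 : ∀ i t, (P {ω | ε i ω ≤ t}).toReal = G0 t)
    (hG0_cont : Continuous G0)
    (hG0_symm : ∀ t, G0 (-t) = 1 - G0 t)
    -- strongly consistent estimators
    (βhat : ℕ → Ω → EuclideanSpace ℝ (Fin p)) (σhat : ℕ → Ω → ℝ)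
    (hσhat_pos : ∀ n ω, 0 < σhat n ω)
    (hβhat : ∀ᵐ ω ∂P, Tendsto (fun n => βhat n ω) atTop (nhds β0))
    (hσhat : ∀ᵐ ω ∂P, Tendsto (fun n => σhat n ω) atTop (nhds σ0))
    -- G₀⁺ is the distribution function of |ε₁|
    (G0plus : ℝ → ℝ)
    (hG0plus : ∀ t, (P {ω | |ε 0 ω| ≤ t}).toReal = G0plus t) :
    ∀ᵐ ω ∂P, Tendsto
      (fun n => ⨆ t : Ici (0:ℝ),
        |(∑ i ∈ Finset.range n,
            if |y i ω - ∑ j, x i ω j * βhat n ω j| / σhat n ω ≤ (t : ℝ) then (1:ℝ) else 0) / n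
          - G0plus t|)
      atTop (nhds 0) := by
  classical
  have hmono' : ∀ s t : ℝ, s ≤ t → P {ω | ε 0 ω ≤ s} ≤ P {ω | ε 0 ω ≤ t} :=
    fun s t hst => measure_mono (fun ω h => le_trans h hst)
  have hatom : ∀ a : ℝ, P {ω | ε 0 ω = a} = 0 := by
    intro a
    have key : ∀ d : ℝ, 0 < d → (P {ω | ε 0 ω = a}).toReal ≤ G0 a - G0 (a - d) := by
      intro d hd
      have hsub : {ω | ε 0 ω = a} ⊆ {ω | ε 0 ω ≤ a} \ {ω | ε 0 ω ≤ a - d} := by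
        intro ω h
        simp only [Set.mem_setOf_eq, Set.mem_diff] at h ⊢
        exact ⟨le_of_eq h, by rw [h]; push_neg; linarith⟩
      have hms : MeasurableSet {ω | ε 0 ω ≤ a - d} :=
        measurableSet_le (hε_meas 0) measurable_const
      have hdiff : P ({ω | ε 0 ω ≤ a} \ {ω | ε 0 ω ≤ a - d})
          = P {ω | ε 0 ω ≤ a} - P {ω | ε 0 ω ≤ a - d} :=
        measure_diff (fun ω h => by simp only [Set.mem_setOf_eq] at h ⊢; linarith)
          hms.nullMeasurableSet (measure_ne_top _ _)
      have h1 : (P {ω | ε 0 ω = a}).toReal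
          ≤ (P ({ω | ε 0 ω ≤ a} \ {ω | ε 0 ω ≤ a - d})).toReal :=
        ENNReal.toReal_mono (by rw [hdiff]; exact ne_top_of_le_ne_top (measure_ne_top _ _) tsub_le_self)
          (measure_mono hsub)
      rw [hdiff, ENNReal.toReal_sub_of_le (hmono' _ _ (by linarith)) (measure_ne_top _ _),
        hG0 0 a, hG0 0 (a - d)] at h1
      exact h1
    have hlim : Tendsto (fun kk : ℕ => G0 a - G0 (a - 1/(kk+1))) atTop (𝓝 0) := by
      have h1 : Tendsto (fun kk : ℕ => a - 1/(kk+1)) atTop (𝓝 a) := by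
        have := tendsto_one_div_add_atTop_nhds_zero_nat (𝕜 := ℝ)
        have h2 := (tendsto_const_nhds (x := a) (f := atTop (α := ℕ))).sub this
        simpa using h2
      have h3 := (hG0_cont.tendsto a).comp h1
      have h4 := (tendsto_const_nhds (x := G0 a) (f := atTop (α := ℕ))).sub h3
      simpa using h4
    have hle : (P {ω | ε 0 ω = a}).toReal ≤ 0 :=
      ge_of_tendsto' hlim (fun kk => key _ (by positivity))
    have : (P {ω | ε 0 ω = a}).toReal = 0 := le_antisymm hle ENNReal.toReal_nonneg
    rw [ENNReal.toReal_eq_zero_iff] at this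
    exact this.resolve_right (measure_ne_top _ _)
  have hG0mono : Monotone G0 := by
    intro s t hst
    rw [← hG0 0 s, ← hG0 0 t]
    exact ENNReal.toReal_mono (measure_ne_top _ _) (hmono' _ _ hst)
  have hG0half : G0 0 = 1/2 := by
    have := hG0_symm 0; rw [neg_zero] at this; linarith
  have hFeq : ∀ t, G0plus t = max (2 * G0 t - 1) 0 := by
    intro t
    by_cases ht : 0 ≤ t
    · have hset : {ω | |ε 0 ω| ≤ t} = {ω | ε 0 ω ≤ t} \ {ω | ε 0 ω < -t} := by
        ext ω
        simp only [Set.mem_setOf_eq, Set.mem_diff, abs_le, not_lt]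
        constructor
        · rintro ⟨h1, h2⟩; exact ⟨h2, h1⟩
        · rintro ⟨h1, h2⟩; exact ⟨h2, h1⟩
      have hPlt : P {ω | ε 0 ω < -t} = P {ω | ε 0 ω ≤ -t} := by
        refine le_antisymm (measure_mono (fun ω (h : ε 0 ω < -t) => le_of_lt h)) ?_
        have hsplit : {ω | ε 0 ω ≤ -t} ⊆ {ω | ε 0 ω < -t} ∪ {ω | ε 0 ω = -t} := by
          intro ω (h : ε 0 ω ≤ -t)
          rcases lt_or_eq_of_le h with h'|h'
          · exact Or.inl h'
          · exact Or.inr h'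
        calc P {ω | ε 0 ω ≤ -t} ≤ P ({ω | ε 0 ω < -t} ∪ {ω | ε 0 ω = -t}) := measure_mono hsplit
          _ ≤ P {ω | ε 0 ω < -t} + P {ω | ε 0 ω = -t} := measure_union_le _ _
          _ = P {ω | ε 0 ω < -t} := by rw [hatom]; simp
      have hdiff : P ({ω | ε 0 ω ≤ t} \ {ω | ε 0 ω < -t})
          = P {ω | ε 0 ω ≤ t} - P {ω | ε 0 ω < -t} :=
        measure_diff (fun ω h => by simp only [Set.mem_setOf_eq] at h ⊢; linarith)
          (measurableSet_lt (hε_meas 0) measurable_const).nullMeasurableSet (measure_ne_top _ _)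
      have hle' : P {ω | ε 0 ω < -t} ≤ P {ω | ε 0 ω ≤ t} :=
        measure_mono (fun ω h => by simp only [Set.mem_setOf_eq] at h ⊢; linarith)
      have h1 : G0plus t = G0 t - G0 (-t) := by
        rw [← hG0plus t, hset, hdiff, ENNReal.toReal_sub_of_le hle' (measure_ne_top _ _),
          hG0 0 t, hPlt, hG0 0 (-t)]
      rw [h1, hG0_symm t]
      have h2 : 2 * G0 t - 1 ≥ 0 := by
        have := hG0mono (show (0:ℝ) ≤ t from ht); rw [hG0half] at this; linarith
      rw [max_eq_left h2]; ring
    · push_neg at ht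
      have hset : {ω | |ε 0 ω| ≤ t} = (∅ : Set Ω) := by
        ext ω; simp only [Set.mem_setOf_eq, Set.mem_empty_iff_false, iff_false, not_le]
        exact lt_of_lt_of_le ht (abs_nonneg _)
      have h1 : G0plus t = 0 := by rw [← hG0plus t, hset]; simp
      have h2 : 2 * G0 t - 1 ≤ 0 := by
        have := hG0mono (le_of_lt ht); rw [hG0half] at this; linarith
      rw [h1, max_eq_right h2]
  have hZ : ∀ i, Measurable (fun ω => (ε i ω, x i ω)) :=
    fun i => (hε_meas i).prodMk (hx_meas i)
  have hFnat : Tendsto (fun k : ℕ => G0plus (k : ℝ)) atTop (𝓝 1) := by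
    have hmono : Monotone (fun k : ℕ => {ω | |ε 0 ω| ≤ (k:ℝ)}) := by
      intro a b hab ω h
      simp only [Set.mem_setOf_eq] at h ⊢
      exact le_trans h (by exact_mod_cast hab)
    have h1 := tendsto_measure_iUnion_atTop (μ := P) hmono
    have hu : (⋃ k : ℕ, {ω | |ε 0 ω| ≤ (k:ℝ)}) = Set.univ := by
      ext ω; simp only [Set.mem_iUnion, Set.mem_setOf_eq, Set.mem_univ, iff_true]
      obtain ⟨k, hk⟩ := exists_nat_gt |ε 0 ω|
      exact ⟨k, le_of_lt hk⟩
    rw [hu, measure_univ] at h1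
    have h2 := (ENNReal.tendsto_toReal (by simp : (1:ENNReal) ≠ ⊤)).comp h1
    simp only [ENNReal.toReal_one] at h2
    have h3 : (fun k : ℕ => (P {ω | |ε 0 ω| ≤ (k:ℝ)}).toReal) = fun k : ℕ => G0plus (k:ℝ) := by
      funext k; exact hG0plus _
    rw [show ENNReal.toReal ∘ (P ∘ fun k : ℕ => {ω | |ε 0 ω| ≤ (k:ℝ)})
        = fun k : ℕ => (P {ω | |ε 0 ω| ≤ (k:ℝ)}).toReal from rfl, h3] at h2
    exact h2
  set H : ℕ → ℝ := fun m => (P {ω | (m:ℝ) < ‖x 0 ω‖}).toReal with hH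
  have hHto : Tendsto H atTop (𝓝 0) := by
    have hanti : Antitone (fun m : ℕ => {ω | (m:ℝ) < ‖x 0 ω‖}) := by
      intro a b hab ω h
      simp only [Set.mem_setOf_eq] at h ⊢
      exact lt_of_le_of_lt (by exact_mod_cast hab) h
    have h1 := tendsto_measure_iInter_atTop (μ := P)
      (fun m => (measurableSet_lt measurable_const (hx_meas 0).norm).nullMeasurableSet)
      hanti ⟨0, measure_ne_top _ _⟩
    have hi : (⋂ m : ℕ, {ω | (m:ℝ) < ‖x 0 ω‖}) = ∅ := by
      ext ω; simp only [Set.mem_iInter, Set.mem_setOf_eq, Set.mem_empty_iff_false, iff_false,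
        not_forall, not_lt]
      obtain ⟨k, hk⟩ := exists_nat_gt ‖x 0 ω‖
      exact ⟨k, le_of_lt hk⟩
    rw [hi, measure_empty] at h1
    have h2 := (ENNReal.tendsto_toReal (by simp : (0:ENNReal) ≠ ⊤)).comp h1
    rw [ENNReal.toReal_zero] at h2; exact h2
  have hE : ∀ s : ℚ, ∀ᵐ ω ∂P, Tendsto
      (fun n => (∑ i ∈ Finset.range n, if |ε i ω| ≤ (s:ℝ) then (1:ℝ) else 0) / n)
      atTop (𝓝 (G0plus s)) := by
    intro s
    have hS : MeasurableSet {q : ℝ × EuclideanSpace ℝ (Fin p) | |q.1| ≤ (s:ℝ)} :=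
      measurableSet_le measurable_fst.abs measurable_const
    have h := slln_indicator P (fun i ω => (ε i ω, x i ω)) hZ hindep hident _ hS
    have hpre : ((fun ω => (ε 0 ω, x 0 ω)) ⁻¹' {q : ℝ × EuclideanSpace ℝ (Fin p) | |q.1| ≤ (s:ℝ)})
        = {ω | |ε 0 ω| ≤ (s:ℝ)} := rfl
    rw [hpre, hG0plus] at h
    filter_upwards [h] with ω hω
    have : (fun n => (∑ i ∈ Finset.range n,
        ({q : ℝ × EuclideanSpace ℝ (Fin p) | |q.1| ≤ (s:ℝ)}).indicator
          (fun _ => (1:ℝ)) (ε i ω, x i ω)) / n)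
        = fun n => (∑ i ∈ Finset.range n, if |ε i ω| ≤ (s:ℝ) then (1:ℝ) else 0) / n := by
      funext n; congr 1
    rw [this] at hω
    exact hω
  have hA : ∀ m : ℕ, ∀ᵐ ω ∂P, Tendsto
      (fun n => (∑ i ∈ Finset.range n, if (m:ℝ) < ‖x i ω‖ then (1:ℝ) else 0) / n)
      atTop (𝓝 (H m)) := by
    intro m
    have hS : MeasurableSet {q : ℝ × EuclideanSpace ℝ (Fin p) | (m:ℝ) < ‖q.2‖} :=
      measurableSet_lt measurable_const measurable_snd.norm
    have h := slln_indicator P (fun i ω => (ε i ω, x i ω)) hZ hindep hident _ hS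
    have hpre : ((fun ω => (ε 0 ω, x 0 ω)) ⁻¹' {q : ℝ × EuclideanSpace ℝ (Fin p) | (m:ℝ) < ‖q.2‖})
        = {ω | (m:ℝ) < ‖x 0 ω‖} := rfl
    rw [hpre] at h
    filter_upwards [h] with ω hω
    have : (fun n => (∑ i ∈ Finset.range n,
        ({q : ℝ × EuclideanSpace ℝ (Fin p) | (m:ℝ) < ‖q.2‖}).indicator
          (fun _ => (1:ℝ)) (ε i ω, x i ω)) / n)
        = fun n => (∑ i ∈ Finset.range n, if (m:ℝ) < ‖x i ω‖ then (1:ℝ) else 0) / n := by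
      funext n; congr 1
    rw [this] at hω
    exact hω
  have hFcont : Continuous G0plus := by
    have : G0plus = fun t => max (2 * G0 t - 1) 0 := funext hFeq
    rw [this]
    exact ((continuous_const.mul hG0_cont).sub continuous_const).max continuous_const
  have hFmono : Monotone G0plus := by
    intro s t hst
    rw [← hG0plus s, ← hG0plus t]
    exact ENNReal.toReal_mono (measure_ne_top _ _)
      (measure_mono (fun ω (h : |ε 0 ω| ≤ s) => le_trans h hst))
  have hFle1 : ∀ t, G0plus t ≤ 1 := by
    intro t
    rw [← hG0plus t]
    exact ENNReal.toReal_le_of_le_ofReal zero_le_one (by simpa using prob_le_one)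
  -- ## Step 4 : the deterministic argument
  filter_upwards [hβhat, hσhat, ae_all_iff.2 hE, ae_all_iff.2 hA] with ω hβ hσ hEω hAω
  rw [Metric.tendsto_atTop]
  intro εr hεr
  set η : ℝ := εr / 6 with hηdef
  have hη : 0 < η := by positivity
  obtain ⟨m, hm⟩ : ∃ m : ℕ, H m < η := (hHto.eventually_lt_const hη).exists
  obtain ⟨k, hk1, hkF⟩ : ∃ k : ℕ, 1 ≤ k ∧ 1 - η < G0plus (k : ℝ) := by
    have h1 : ∀ᶠ kk : ℕ in atTop, 1 - η < G0plus (kk:ℝ) :=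
      hFnat.eventually (eventually_gt_nhds (by linarith))
    exact ((eventually_ge_atTop 1).and h1).exists.imp (fun kk h => ⟨h.1, h.2⟩)
  set q : ℝ := (k : ℝ) with hqdef
  have hq1 : (1:ℝ) ≤ q := by rw [hqdef]; exact_mod_cast hk1
  have hq0 : (0:ℝ) < q := lt_of_lt_of_le one_pos hq1
  obtain ⟨ρb, hρb, hucF⟩ : ∃ ρb > 0, ∀ s ∈ Icc (-1:ℝ) (q+1), ∀ t ∈ Icc (-1:ℝ) (q+1),
      |s - t| < ρb → |G0plus s - G0plus t| ≤ η := by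
    have huc := (isCompact_Icc (a := (-1:ℝ)) (b := q+1)).uniformContinuousOn_of_continuous
      hFcont.continuousOn
    rw [Metric.uniformContinuousOn_iff] at huc
    obtain ⟨d, hd0, hd⟩ := huc η hη
    refine ⟨d, hd0, fun s hs t ht hst => le_of_lt ?_⟩
    have := hd s hs t ht (by rwa [Real.dist_eq])
    rwa [Real.dist_eq] at this
  obtain ⟨ρq, hρq0, hρq⟩ : ∃ ρq : ℚ, 0 < ((ρq:ℚ):ℝ) ∧ ((ρq:ℚ):ℝ) < min (ρb/2) 1 := by
    obtain ⟨r, hr1, hr2⟩ := exists_rat_btwn (show (0:ℝ) < min (ρb/2) 1 by positivity)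
    exact ⟨r, hr1, hr2⟩
  set ρ : ℝ := ((ρq:ℚ) : ℝ) with hρdef
  have hρ0 : 0 < ρ := hρq0
  have hρ1 : ρ ≤ 1 := le_of_lt (lt_of_lt_of_le hρq (min_le_right _ _))
  have hρb2 : 2 * ρ < ρb := by
    have := lt_of_lt_of_le hρq (min_le_left _ _)
    linarith
  set K : ℕ := ⌈q / ρ⌉₊ with hKdef
  have hK1 : 1 ≤ K := Nat.ceil_pos.2 (div_pos hq0 hρ0)
  have hK0 : (0:ℝ) < (K:ℝ) := by exact_mod_cast hK1
  have hmesh : q / K ≤ ρ := by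
    have h1 : q / ρ ≤ (K:ℝ) := Nat.le_ceil _
    have h2 : q ≤ (K:ℝ) * ρ := (div_le_iff₀ hρ0).1 h1
    rw [div_le_iff₀ hK0]
    calc q ≤ (K:ℝ) * ρ := h2
      _ = ρ * K := mul_comm _ _
  set δ : ℝ := σ0 * ρ / (q + m + 1) with hδdef
  have hpos : (0:ℝ) < q + m + 1 := by positivity
  have hδ0 : 0 < δ := by rw [hδdef]; positivity
  have hδκ : δ * q + (m:ℝ) * δ ≤ σ0 * ρ := by
    have h : δ * (q + m) ≤ σ0 * ρ := by
      rw [hδdef, div_mul_eq_mul_div, div_le_iff₀ hpos]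
      nlinarith [mul_pos hσ0 hρ0]
    calc δ * q + (m:ℝ) * δ = δ * (q + m) := by ring
      _ ≤ σ0 * ρ := h
  have hδσ : δ ≤ σ0 := by
    rw [hδdef, div_le_iff₀ hpos]
    nlinarith [mul_nonneg hσ0.le (show (0:ℝ) ≤ q + m + 1 - ρ by
      have h0m : (0:ℝ) ≤ (m:ℝ) := Nat.cast_nonneg m
      linarith)]
  -- rational grid thresholds
  set sp : ℕ → ℚ := fun j => ((j:ℚ)+1) * (k:ℚ) / (K:ℚ) + ρq with hspdef
  set sm : ℕ → ℚ := fun j => (j:ℚ) * (k:ℚ) / (K:ℚ) - ρq with hsmdef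
  have hKne : ((K:ℚ):ℝ) ≠ 0 := by push_cast; exact ne_of_gt hK0
  have hsp : ∀ j : ℕ, ((sp j : ℚ) : ℝ) = ((j:ℝ)+1) * q / K + ρ := by
    intro j; simp only [hspdef, hρdef, hqdef]; push_cast; ring
  have hsm : ∀ j : ℕ, ((sm j : ℚ) : ℝ) = (j:ℝ) * q / K - ρ := by
    intro j; simp only [hsmdef, hρdef, hqdef]; push_cast; ring
  -- eventual properties of n
  have h2 : ∀ᶠ n in atTop, ‖βhat n ω - β0‖ ≤ δ := by
    rw [Metric.tendsto_atTop] at hβ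
    obtain ⟨N, hN⟩ := hβ δ hδ0
    exact eventually_atTop.2 ⟨N, fun n hn => by
      have := hN n hn; rw [dist_eq_norm] at this; linarith⟩
  have h3 : ∀ᶠ n in atTop, |σhat n ω - σ0| ≤ δ := by
    rw [Metric.tendsto_atTop] at hσ
    obtain ⟨N, hN⟩ := hσ δ hδ0
    exact eventually_atTop.2 ⟨N, fun n hn => by
      have := hN n hn; rw [Real.dist_eq] at this; linarith⟩
  have h4 : ∀ᶠ n in atTop, ∀ j ∈ Finset.range K,
      |(∑ i ∈ Finset.range n, if |ε i ω| ≤ ((sp j : ℚ):ℝ) then (1:ℝ) else 0) / n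
        - G0plus ((sp j : ℚ):ℝ)| ≤ η
      ∧ |(∑ i ∈ Finset.range n, if |ε i ω| ≤ ((sm j : ℚ):ℝ) then (1:ℝ) else 0) / n
        - G0plus ((sm j : ℚ):ℝ)| ≤ η := by
    rw [eventually_all_finset]
    intro j _
    obtain ⟨Na, hNa⟩ := Metric.tendsto_atTop.1 (hEω (sp j)) η hη
    obtain ⟨Nb, hNb⟩ := Metric.tendsto_atTop.1 (hEω (sm j)) η hη
    refine eventually_atTop.2 ⟨max Na Nb, fun n hn => ⟨?_, ?_⟩⟩
    · have := hNa n (le_trans (le_max_left _ _) hn)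
      rw [Real.dist_eq] at this; exact le_of_lt this
    · have := hNb n (le_trans (le_max_right _ _) hn)
      rw [Real.dist_eq] at this; exact le_of_lt this
  have h5 : ∀ᶠ n in atTop,
      (∑ i ∈ Finset.range n, if (m:ℝ) < ‖x i ω‖ then (1:ℝ) else 0) / n ≤ 2 * η := by
    obtain ⟨Na, hNa⟩ := Metric.tendsto_atTop.1 (hAω m) η hη
    refine eventually_atTop.2 ⟨Na, fun n hn => ?_⟩
    have := hNa n hn; rw [Real.dist_eq] at this
    have h' := abs_lt.1 this
    linarith [h'.2]
  have h1 : ∀ᶠ n in atTop, 1 ≤ n := eventually_ge_atTop 1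
  rw [eventually_atTop] at h1 h2 h3 h4 h5
  obtain ⟨N1, hN1⟩ := h1; obtain ⟨N2, hN2⟩ := h2; obtain ⟨N3, hN3⟩ := h3
  obtain ⟨N4, hN4⟩ := h4; obtain ⟨N5, hN5⟩ := h5
  refine ⟨max (max N1 N2) (max N3 (max N4 N5)), fun n hn => ?_⟩
  have hnn : 1 ≤ n := hN1 n (le_trans (le_max_of_le_left (le_max_left _ _)) hn)
  have hβn : ‖βhat n ω - β0‖ ≤ δ := hN2 n (le_trans (le_max_of_le_left (le_max_right _ _)) hn)
  have hσn : |σhat n ω - σ0| ≤ δ := hN3 n (le_trans (le_max_of_le_right (le_max_left _ _)) hn)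
  have hEn := hN4 n (le_trans (le_max_of_le_right (le_max_of_le_right (le_max_left _ _))) hn)
  have hAn : (∑ i ∈ Finset.range n, if (m:ℝ) < ‖x i ω‖ then (1:ℝ) else 0) / n ≤ 2 * η :=
    hN5 n (le_trans (le_max_of_le_right (le_max_of_le_right (le_max_right _ _))) hn)
  -- the model bound on residual numerators
  have hEbound : ∀ i, |y i ω - (∑ j, x i ω j * βhat n ω j) - σ0 * ε i ω| ≤ ‖x i ω‖ * δ := by
    intro i
    have hnum : y i ω - (∑ j, x i ω j * βhat n ω j) - σ0 * ε i ω
        = ∑ j, x i ω j * (β0 j - βhat n ω j) := by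
      have hs : ∑ j, x i ω j * (β0 j - βhat n ω j)
          = (∑ j, x i ω j * β0 j) - ∑ j, x i ω j * βhat n ω j := by
        rw [← Finset.sum_sub_distrib]
        exact Finset.sum_congr rfl (fun j _ => by ring)
      rw [hmod i ω, hs]; ring
    have hinner : (∑ j, x i ω j * (β0 j - βhat n ω j))
        = inner (𝕜 := ℝ) (x i ω) (β0 - βhat n ω) := by
      rw [PiLp.inner_apply]
      exact Finset.sum_congr rfl (fun j _ => by
        simp [RCLike.inner_apply, PiLp.sub_apply]; ring)
    have hcs : |∑ j, x i ω j * (β0 j - βhat n ω j)| ≤ ‖x i ω‖ * ‖β0 - βhat n ω‖ := by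
      rw [hinner]; exact abs_real_inner_le_norm _ _
    have hβ' : ‖β0 - βhat n ω‖ ≤ δ := by rw [norm_sub_rev]; exact hβn
    calc |y i ω - (∑ j, x i ω j * βhat n ω j) - σ0 * ε i ω|
        = |∑ j, x i ω j * (β0 j - βhat n ω j)| := by rw [hnum]
      _ ≤ ‖x i ω‖ * ‖β0 - βhat n ω‖ := hcs
      _ ≤ ‖x i ω‖ * δ := mul_le_mul_of_nonneg_left hβ' (norm_nonneg _)
  -- apply the deterministic bound
  have hall : ∀ t : ℝ, 0 ≤ t →
      |(∑ i ∈ Finset.range n,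
          if |y i ω - ∑ j, x i ω j * βhat n ω j| / σhat n ω ≤ t then (1:ℝ) else 0) / n
        - G0plus t| ≤ 5 * η := by
    apply det_bound n hnn
      (fun i => y i ω - ∑ j, x i ω j * βhat n ω j) (fun i => ε i ω) (fun i => ‖x i ω‖)
      (fun i => norm_nonneg _)
      σ0 (σhat n ω) δ η (m:ℝ) q ρ ρb K
      hσ0 (hσhat_pos n ω) hδ0 hη (Nat.cast_nonneg m) hq1 hρ0 hρ1 hρb2 hK1 hmesh
      hσn hδκ hδσ hEbound G0plus hFmono hFle1 (le_of_lt hkF) hucF ?_ hAn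
    intro j hj
    have h := hEn j (Finset.mem_range.2 hj)
    rw [hsp j, hsm j] at h
    exact h
  haveI : Nonempty (Ici (0:ℝ)) := ⟨⟨0, Set.self_mem_Ici⟩⟩
  simp only [Real.dist_eq, sub_zero]
  refine lt_of_le_of_lt ?_ (show 5 * η < εr by rw [hηdef]; linarith)
  rw [abs_of_nonneg (Real.iSup_nonneg (fun t => abs_nonneg _))]
  exact ciSup_le (fun t => hall t t.2)
end

section
/- Let (y_i, x_i) be i.i.d. with y_i = f(x_i, β_0) + σ_0 ε_i, where the errors ε_i are i.i.d. with distribution function G_0 continuous and symmetric around 0, independent of x_i, and σ_0 > 0. Assume (C4): the class F = { x ↦ f(x, β) : ‖β − β_0‖ ≤ 1 } has an envelope F ∈ L¹(P_x) and finite ε-bracketing numbers N_{[ ]}(ε, F, L¹(P_x)) < ∞ for every ε > 0, and (C5): G_0 has a bounded density g_0. Fix t ≥ 0 and set V_0 = {β : ‖β − β_0‖ ≤ 1} and I_0 = [σ_0/2, 2σ_0]. Then for the class H = { (y, x) ↦ 1{ |y − f(x, β)| ≤ σ t } : (β, σ) ∈ V_0 × I_0 }, one has sup_{h∈H} | (1/n)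 Σ_{i=1}^n h(y_i, x_i) − E h(y_1, x_1) | → 0 almost surely. -/
open MeasureTheory ProbabilityTheory Filter Set

lemma aesm_of_brackets {X : Type*} [MeasurableSpace X] {μ : Measure X}
    (g : X → ℝ)
    (h : ∀ ε' : ℝ, 0 < ε' → ∃ gL gU : X → ℝ, Integrable gL μ ∧ Integrable gU μ ∧
      (∀ xv, gL xv ≤ g xv ∧ g xv ≤ gU xv) ∧ ∫ xv, (gU xv - gL xv) ∂μ ≤ ε') :
    AEStronglyMeasurable g μ := by
  choose gL gU hL hU hpt hint using fun n : ℕ => h ((1/2)^n) (by positivity)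
  have hd_nonneg : ∀ n xv, 0 ≤ gU n xv - gL n xv := fun n xv => by
    have h1 := (hpt n xv).1; have h2 := (hpt n xv).2; linarith
  have hdint : ∀ n, Integrable (fun xv => gU n xv - gL n xv) μ := fun n => (hU n).sub (hL n)
  have hlint : ∀ n, ∫⁻ xv, ENNReal.ofReal (gU n xv - gL n xv) ∂μ ≤ ENNReal.ofReal ((1/2)^n) := by
    intro n
    rw [← ofReal_integral_eq_lintegral_ofReal (hdint n) (ae_of_all _ (hd_nonneg n))]
    exact ENNReal.ofReal_le_ofReal (hint n)
  have hsum : ∫⁻ xv, ∑' n, ENNReal.ofReal (gU n xv - gL n xv) ∂μ < ⊤ := by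
    rw [lintegral_tsum (fun n => ((hdint n).aemeasurable.ennreal_ofReal))]
    calc ∑' n, ∫⁻ xv, ENNReal.ofReal (gU n xv - gL n xv) ∂μ
        ≤ ∑' n : ℕ, ENNReal.ofReal ((1/2)^n) := ENNReal.tsum_le_tsum hlint
      _ ≤ ∑' n : ℕ, (ENNReal.ofReal (1/2))^n := by
          refine ENNReal.tsum_le_tsum (fun n => ?_)
          rw [← ENNReal.ofReal_pow (by norm_num)]
      _ < ⊤ := by
          rw [ENNReal.tsum_geometric]
          refine ENNReal.inv_lt_top.2 ?_
          have h12 : ENNReal.ofReal (1/2) < 1 := ENNReal.ofReal_lt_one.2 (by norm_num)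
          exact tsub_pos_of_lt h12
  have hae : ∀ᵐ xv ∂μ, ∑' n, ENNReal.ofReal (gU n xv - gL n xv) ≠ ⊤ :=
    (ae_lt_top' (AEMeasurable.ennreal_tsum (fun n => (hdint n).aemeasurable.ennreal_ofReal))
      hsum.ne).mono (fun xv hx => hx.ne)
  refine aestronglyMeasurable_of_tendsto_ae atTop (fun n => (hL n).aestronglyMeasurable) ?_
  filter_upwards [hae] with xv hx
  have h0 : Tendsto (fun n => ENNReal.ofReal (gU n xv - gL n xv)) atTop (nhds 0) :=
    ENNReal.tendsto_atTop_zero_of_tsum_ne_top hx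
  have h1 : Tendsto (fun n => gU n xv - gL n xv) atTop (nhds 0) := by
    have hto : Tendsto ENNReal.toReal (nhds 0) (nhds (0:ℝ)) := by
      simpa using ENNReal.tendsto_toReal (a := 0) ENNReal.zero_ne_top
    have h2 := hto.comp h0
    simpa [Function.comp_def, ENNReal.toReal_ofReal (hd_nonneg _ xv)] using h2
  rw [tendsto_iff_dist_tendsto_zero]
  refine squeeze_zero (fun n => dist_nonneg) (fun n => ?_) h1
  rw [Real.dist_eq]
  have h2 := (hpt n xv).1; have h3 := (hpt n xv).2
  rw [abs_le]; constructor <;> linarith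

lemma bracket_ulln {Ω : Type*} [MeasurableSpace Ω] (P : Measure Ω)
    {Θ : Type*} (Z : Θ → ℕ → Ω → ℝ) (M : Θ → ℝ)
    (H : ∀ δ : ℝ, 0 < δ → ∃ (ι : Type) (_ : Fintype ι) (L U : ι → ℕ → Ω → ℝ)
      (ML MU : ι → ℝ),
      (∀ j, ∀ᵐ ω ∂P, Tendsto (fun n => (∑ i ∈ Finset.range n, L j i ω) / n) atTop (nhds (ML j))) ∧
      (∀ j, ∀ᵐ ω ∂P, Tendsto (fun n => (∑ i ∈ Finset.range n, U j i ω) / n) atTop (nhds (MU j))) ∧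
      (∀ᵐ ω ∂P, ∀ θ, ∃ j, (∀ i, L j i ω ≤ Z θ i ω ∧ Z θ i ω ≤ U j i ω) ∧
        ML j ≤ M θ ∧ M θ ≤ MU j ∧ MU j - ML j ≤ δ)) :
    ∀ᵐ ω ∂P, ∀ k : ℕ, ∃ N : ℕ, ∀ n ≥ N, ∀ θ,
      |(∑ i ∈ Finset.range n, Z θ i ω) / n - M θ| ≤ 1 / (k + 1) := by
  have Hk : ∀ k : ℕ, ∃ (ι : Type) (_ : Fintype ι) (L U : ι → ℕ → Ω → ℝ)
      (ML MU : ι → ℝ),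
      (∀ j, ∀ᵐ ω ∂P, Tendsto (fun n => (∑ i ∈ Finset.range n, L j i ω) / n) atTop (nhds (ML j))) ∧
      (∀ j, ∀ᵐ ω ∂P, Tendsto (fun n => (∑ i ∈ Finset.range n, U j i ω) / n) atTop (nhds (MU j))) ∧
      (∀ᵐ ω ∂P, ∀ θ, ∃ j, (∀ i, L j i ω ≤ Z θ i ω ∧ Z θ i ω ≤ U j i ω) ∧
        ML j ≤ M θ ∧ M θ ≤ MU j ∧ MU j - ML j ≤ 1 / (2 * (k + 1))) :=
    fun k => H (1 / (2 * (k + 1))) (by positivity)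
  choose ι ιF L U ML MU h1 h2 h3 using Hk
  have hae : ∀ᵐ ω ∂P, ∀ k : ℕ,
      (∀ j, Tendsto (fun n => (∑ i ∈ Finset.range n, L k j i ω) / n) atTop (nhds (ML k j))) ∧
      (∀ j, Tendsto (fun n => (∑ i ∈ Finset.range n, U k j i ω) / n) atTop (nhds (MU k j))) ∧
      (∀ θ, ∃ j, (∀ i, L k j i ω ≤ Z θ i ω ∧ Z θ i ω ≤ U k j i ω) ∧
        ML k j ≤ M θ ∧ M θ ≤ MU k j ∧ MU k j - ML k j ≤ 1 / (2 * (k + 1))) := by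
    rw [ae_all_iff]
    intro k
    haveI := ιF k
    refine ((ae_all_iff.2 (h1 k)).and ((ae_all_iff.2 (h2 k)).and (h3 k))).mono ?_
    exact fun ω hω => ⟨hω.1, hω.2.1, hω.2.2⟩
  filter_upwards [hae] with ω hω k
  haveI := ιF k
  obtain ⟨hL, hU, hB⟩ := hω k
  set δ : ℝ := 1 / (2 * ((k : ℝ) + 1)) with hδdef
  have hδpos : 0 < δ := by positivity
  have hNL : ∀ j, ∃ N, ∀ n ≥ N, |(∑ i ∈ Finset.range n, L k j i ω) / n - ML k j| < δ := by
    intro j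
    have := (Metric.tendsto_atTop.1 (hL j)) δ hδpos
    simpa [Real.dist_eq] using this
  have hNU : ∀ j, ∃ N, ∀ n ≥ N, |(∑ i ∈ Finset.range n, U k j i ω) / n - MU k j| < δ := by
    intro j
    have := (Metric.tendsto_atTop.1 (hU j)) δ hδpos
    simpa [Real.dist_eq] using this
  choose NL hNL' using hNL
  choose NU hNU' using hNU
  refine ⟨(Finset.univ : Finset (ι k)).sup (fun j => max (NL j) (NU j)), fun n hn θ => ?_⟩
  obtain ⟨j, hjpt, hjL, hjU, hjgap⟩ := hB θ
  have hnL : n ≥ NL j :=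
    le_trans (le_trans (le_max_left _ _) (Finset.le_sup (f := fun j => max (NL j) (NU j)) (Finset.mem_univ j))) hn
  have hnU : n ≥ NU j :=
    le_trans (le_trans (le_max_right _ _) (Finset.le_sup (f := fun j => max (NL j) (NU j)) (Finset.mem_univ j))) hn
  have hLn := hNL' j n hnL
  have hUn := hNU' j n hnU
  have hinv : (0:ℝ) ≤ ((n:ℝ))⁻¹ := by positivity
  have hsumL : (∑ i ∈ Finset.range n, L k j i ω) / n ≤ (∑ i ∈ Finset.range n, Z θ i ω) / n := by
    rw [div_eq_mul_inv, div_eq_mul_inv]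
    exact mul_le_mul_of_nonneg_right
      (Finset.sum_le_sum (fun i _ => (hjpt i).1)) hinv
  have hsumU : (∑ i ∈ Finset.range n, Z θ i ω) / n ≤ (∑ i ∈ Finset.range n, U k j i ω) / n := by
    rw [div_eq_mul_inv, div_eq_mul_inv]
    exact mul_le_mul_of_nonneg_right
      (Finset.sum_le_sum (fun i _ => (hjpt i).2)) hinv
  have habsL := abs_le.1 hLn.le
  have habsU := abs_le.1 hUn.le
  have hkey : (1:ℝ) / (k + 1) = 2 * δ := by
    have hk0 : ((k:ℝ)+1) ≠ 0 := by positivity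
    rw [hδdef]; field_simp
  rw [hkey, abs_le]
  constructor
  · nlinarith [habsL.1, habsL.2, hjL, hjgap, hsumL]
  · nlinarith [habsU.1, habsU.2, hjU, hjgap, hsumU]

set_option maxHeartbeats 2000000 in
/-- Lemma B.4: uniform strong law of large numbers over the class
`H = { (y,x) ↦ 1{|y − f(x,β)| ≤ σ t} : (β,σ) ∈ V₀ × I₀ }` in the nonlinear regression model,
under the bracketing condition (C4) and the bounded-density condition (C5). -/
theorem ulln_indicator_class_nonlinear
    {Ω : Type*} [MeasurableSpace Ω] (P : Measure Ω) [IsProbabilityMeasure P]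
    {p q : ℕ}
    -- the observations and errors
    (x : ℕ → Ω → EuclideanSpace ℝ (Fin p)) (ε : ℕ → Ω → ℝ) (y : ℕ → Ω → ℝ)
    (hx_meas : ∀ i, Measurable (x i)) (hε_meas : ∀ i, Measurable (ε i))
    -- the nonlinear model
    (f : EuclideanSpace ℝ (Fin p) → EuclideanSpace ℝ (Fin q) → ℝ)
    (β0 : EuclideanSpace ℝ (Fin q)) (σ0 : ℝ) (hσ0 : 0 < σ0)
    (hmod : ∀ i ω, y i ω = f (x i ω) β0 + σ0 * ε i ω)
    -- (ε_i, x_i) are i.i.d., with ε_i independent of x_i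
    (hindep : iIndepFun (fun i ω => (ε i ω, x i ω)) P)
    (hident : ∀ i, IdentDistrib (fun ω => (ε i ω, x i ω)) (fun ω => (ε 0 ω, x 0 ω)) P P)
    (hεx : ∀ i, IndepFun (ε i) (x i) P)
    -- G₀ is the continuous distribution function of the errors, symmetric around 0
    (G0 : ℝ → ℝ)
    (hG0 : ∀ i t, (P {ω | ε i ω ≤ t}).toReal = G0 t)
    (hG0_cont : Continuous G0)
    (hG0_symm : ∀ t, G0 (-t) = 1 - G0 t)
    -- (C4): envelope in L¹(P_x) and finite bracketing numbers in L¹(P_x)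
    (hC4_env : ∃ F : EuclideanSpace ℝ (Fin p) → ℝ, Integrable F (P.map (x 0)) ∧
      ∀ β : EuclideanSpace ℝ (Fin q), ‖β - β0‖ ≤ 1 → ∀ xv, |f xv β| ≤ F xv)
    (hC4_brack : ∀ ε' : ℝ, 0 < ε' →
      ∃ (m : ℕ) (fL fU : Fin m → EuclideanSpace ℝ (Fin p) → ℝ),
        (∀ k, Integrable (fL k) (P.map (x 0)) ∧ Integrable (fU k) (P.map (x 0)) ∧
          ∫ xv, (fU k xv - fL k xv) ∂(P.map (x 0)) ≤ ε') ∧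
        (∀ β : EuclideanSpace ℝ (Fin q), ‖β - β0‖ ≤ 1 →
          ∃ k, ∀ xv, fL k xv ≤ f xv β ∧ f xv β ≤ fU k xv))
    -- (C5): G₀ has a bounded density g₀
    (g0 : ℝ → ℝ) (hg0_nonneg : ∀ u, 0 ≤ g0 u) (hg0_bdd : ∃ C, ∀ u, g0 u ≤ C)
    (hG0_dens : ∀ s, G0 s = ∫ u in Iic s, g0 u)
    -- the fixed threshold t ≥ 0
    (t : ℝ) (ht : 0 ≤ t) :
    ∀ᵐ ω ∂P, Tendsto
      (fun n =>
        ⨆ β : {b : EuclideanSpace ℝ (Fin q) // ‖b - β0‖ ≤ 1},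
          ⨆ σ : Icc (σ0 / 2) (2 * σ0),
            |(∑ i ∈ Finset.range n,
                if |y i ω - f (x i ω) (β : EuclideanSpace ℝ (Fin q))| ≤ (σ : ℝ) * t
                then (1:ℝ) else 0) / n
              - ∫ ω', (if |y 0 ω' - f (x 0 ω') (β : EuclideanSpace ℝ (Fin q))| ≤ (σ : ℝ) * t
                  then (1:ℝ) else 0) ∂P|)
      atTop (nhds 0) := by
  classical
  set μx : Measure (EuclideanSpace ℝ (Fin p)) := P.map (x 0) with hμxdef
  haveI : IsProbabilityMeasure μx := Measure.isProbabilityMeasure_map (hx_meas 0).aemeasurable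
  set ν : Measure ℝ := P.map (ε 0) with hνdef
  haveI : IsProbabilityMeasure ν := Measure.isProbabilityMeasure_map (hε_meas 0).aemeasurable
  -- basic facts about G0
  have hG0_nonneg : ∀ s, 0 ≤ G0 s := fun s => (hG0 0 s) ▸ ENNReal.toReal_nonneg
  have hG0_le_one : ∀ s, G0 s ≤ 1 := by
    intro s
    rw [← hG0 0 s]
    calc (P {ω | ε 0 ω ≤ s}).toReal ≤ (P univ).toReal :=
          ENNReal.toReal_mono (measure_ne_top _ _) (measure_mono (subset_univ _))
      _ = 1 := by simp
  have hG0_mono : Monotone G0 := by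
    intro a b hab
    rw [← hG0 0 a, ← hG0 0 b]
    exact ENNReal.toReal_mono (measure_ne_top _ _)
      (measure_mono (fun ω (h : ε 0 ω ≤ a) => le_trans h hab))
  obtain ⟨C0, hC0⟩ := hg0_bdd
  set C := max C0 0 with hCdef
  have hC : ∀ u, g0 u ≤ C := fun u => (hC0 u).trans (le_max_left _ _)
  have hCnn : (0:ℝ) ≤ C := le_max_right _ _
  have hG0_half : G0 0 = 1/2 := by
    have := hG0_symm 0; rw [neg_zero] at this; linarith
  have hg0_int : ∀ s, IntegrableOn g0 (Iic s) := by
    intro s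
    have h1 : (1:ℝ)/2 ≤ G0 (max s 0) := by
      rw [← hG0_half]; exact hG0_mono (le_max_right _ _)
    have h2 : IntegrableOn g0 (Iic (max s 0)) := by
      by_contra hcon
      rw [hG0_dens (max s 0), integral_undef hcon] at h1
      linarith
    exact h2.mono_set (Iic_subset_Iic.2 (le_max_left _ _))
  have hG0_lip : ∀ u v : ℝ, u ≤ v → G0 v - G0 u ≤ C * (v - u) := by
    intro u v huv
    have hdisj : Disjoint (Iic u) (Ioc u v) := by
      refine Set.disjoint_left.2 (fun w hw hw2 => ?_)
      exact absurd hw2.1 (not_lt.2 hw)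
    have hsplit : ∫ w in Iic v, g0 w = (∫ w in Iic u, g0 w) + ∫ w in Ioc u v, g0 w := by
      rw [← setIntegral_union hdisj measurableSet_Ioc (hg0_int u)
        ((hg0_int v).mono_set Ioc_subset_Iic_self), Iic_union_Ioc_eq_Iic huv]
    have hbound : ∫ w in Ioc u v, g0 w ≤ C * (v - u) := by
      have h1 : ∫ w in Ioc u v, g0 w ≤ ∫ _w in Ioc u v, C :=
        setIntegral_mono ((hg0_int v).mono_set Ioc_subset_Iic_self)
          (show IntegrableOn (fun _ => C) (Ioc u v) volume from
            integrableOn_const measure_Ioc_lt_top.ne) (fun w => hC w)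
      rw [setIntegral_const, measureReal_def, Real.volume_Ioc, smul_eq_mul,
        ENNReal.toReal_ofReal (by linarith)] at h1
      linarith [h1]
    rw [hG0_dens u, hG0_dens v, hsplit]
    linarith
  -- facts about ν
  have hνIic : ∀ s, ν (Iic s) = ENNReal.ofReal (G0 s) := by
    intro s
    have h1 : (ν (Iic s)).toReal = G0 s := by
      rw [hνdef, Measure.map_apply (hε_meas 0) measurableSet_Iic]
      exact hG0 0 s
    rw [← h1, ENNReal.ofReal_toReal (measure_ne_top _ _)]
  have hνIoc : ∀ u v : ℝ, u ≤ v → (ν (Ioc u v)).toReal = G0 v - G0 u := by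
    intro u v huv
    have h2 : ν (Ioc u v) = ν (Iic v) - ν (Iic u) := by
      rw [← Iic_sdiff_Iic]
      exact measure_diff (Iic_subset_Iic.2 huv) measurableSet_Iic.nullMeasurableSet
        (measure_ne_top _ _)
    rw [h2, ENNReal.toReal_sub_of_le
      (by rw [hνIic, hνIic]; exact ENNReal.ofReal_le_ofReal (hG0_mono huv))
      (measure_ne_top _ _), hνIic, hνIic,
      ENNReal.toReal_ofReal (hG0_nonneg _), ENNReal.toReal_ofReal (hG0_nonneg _)]
  have hν_pt : ∀ u : ℝ, ν {u} = 0 := by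
    intro u
    have hle : ∀ d : ℝ, 0 < d → (ν {u}).toReal ≤ C * d := by
      intro d hd
      have hsub : ({u} : Set ℝ) ⊆ Ioc (u - d) u := by
        intro w hw
        rw [mem_singleton_iff] at hw
        subst hw
        exact ⟨by linarith, le_refl _⟩
      have h1 := ENNReal.toReal_mono (measure_ne_top _ _) (measure_mono (μ := ν) hsub)
      rw [hνIoc (u - d) u (by linarith)] at h1
      have h4 := hG0_lip (u - d) u (by linarith)
      have : u - (u - d) = d := by ring
      rw [this] at h4
      linarith
    have hz : (ν {u}).toReal ≤ 0 := by
      by_contra hcon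
      push_neg at hcon
      have h5 := hle ((ν {u}).toReal / (2 * (C + 1))) (by positivity)
      have heq : C * ((ν {u}).toReal / (2 * (C + 1))) = (C / (2 * (C + 1))) * (ν {u}).toReal := by
        ring
      have hlt : C / (2 * (C + 1)) < 1 := by
        rw [div_lt_one (by positivity)]; linarith
      rw [heq] at h5
      nlinarith [mul_lt_mul_of_pos_right hlt hcon]
    have h0 : (ν {u}).toReal = 0 := le_antisymm hz ENNReal.toReal_nonneg
    exact ((ENNReal.toReal_eq_zero_iff _).1 h0).resolve_right (measure_ne_top _ _)
  have hνIcc : ∀ u v : ℝ, (ν (Icc u v)).toReal = max (G0 v - G0 u) 0 := by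
    intro u v
    rcases le_or_gt u v with huv | huv
    · have he : ν (Icc u v) = ν (Ioc u v) := by
        refine le_antisymm ?_ (measure_mono Ioc_subset_Icc_self)
        calc ν (Icc u v) ≤ ν (Ioc u v ∪ {u}) := by
              refine measure_mono (fun w hw => ?_)
              rcases eq_or_lt_of_le hw.1 with h | h
              · exact Or.inr (by simp [← h])
              · exact Or.inl ⟨h, hw.2⟩
          _ ≤ ν (Ioc u v) + ν {u} := measure_union_le _ _
          _ = ν (Ioc u v) := by rw [hν_pt u, add_zero]
      rw [he, hνIoc u v huv, max_eq_left (by linarith [hG0_mono huv])]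
    · rw [Icc_eq_empty (not_le.2 huv)]
      rw [max_eq_right (by linarith [hG0_mono huv.le])]
      simp
  -- measurability of the regression functions
  have hAESM : ∀ β : EuclideanSpace ℝ (Fin q), ‖β - β0‖ ≤ 1 →
      AEStronglyMeasurable (fun xv => f xv β) μx := by
    intro β hβ
    apply aesm_of_brackets
    intro ε' hε'
    obtain ⟨m, fL, fU, hbr, hcov⟩ := hC4_brack ε' hε'
    obtain ⟨k, hk⟩ := hcov β hβ
    exact ⟨fL k, fU k, (hbr k).1, (hbr k).2.1, hk, (hbr k).2.2⟩
  obtain ⟨F0, hF0m, hF0e⟩ := hAESM β0 (by simp)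
  have hxident : ∀ i, P.map (x i) = μx := by
    intro i
    have h2 : IdentDistrib (x i) (x 0) P P := by
      have h1 := (hident i).comp (u := Prod.snd) measurable_snd
      exact h1
    rw [hμxdef]
    exact h2.map_eq
  have hpull : ∀ (φ ψ : EuclideanSpace ℝ (Fin p) → ℝ), φ =ᵐ[μx] ψ → ∀ i,
      ∀ᵐ ω ∂P, φ (x i ω) = ψ (x i ω) := by
    intro φ ψ hφψ i
    have h1 : ∀ᵐ xv ∂(P.map (x i)), φ xv = ψ xv := by rw [hxident i]; exact hφψ
    exact ae_of_ae_map (hx_meas i).aemeasurable h1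
  -- integrability of the indicators in the class
  have hZaesm : ∀ β : EuclideanSpace ℝ (Fin q), ‖β - β0‖ ≤ 1 → ∀ σt : ℝ,
      AEStronglyMeasurable (fun ω => if |y 0 ω - f (x 0 ω) β| ≤ σt then (1:ℝ) else 0) P := by
    intro β hβ σt
    obtain ⟨Fβ, hFβm, hFβe⟩ := hAESM β hβ
    have h1 : ∀ᵐ ω ∂P, f (x 0 ω) β = Fβ (x 0 ω) := hpull _ _ hFβe 0
    have h2 : ∀ᵐ ω ∂P, f (x 0 ω) β0 = F0 (x 0 ω) := hpull _ _ hF0e 0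
    refine ⟨fun ω => if |F0 (x 0 ω) + σ0 * ε 0 ω - Fβ (x 0 ω)| ≤ σt then (1:ℝ) else 0, ?_, ?_⟩
    · apply Measurable.stronglyMeasurable
      refine Measurable.ite ?_ measurable_const measurable_const
      exact measurableSet_le
        ((((hF0m.measurable.comp (hx_meas 0)).add (measurable_const.mul (hε_meas 0))).sub
          (hFβm.measurable.comp (hx_meas 0))).abs) measurable_const
    · filter_upwards [h1, h2] with ω e1 e2
      rw [hmod 0 ω, e1, e2]
  have hZint : ∀ β : EuclideanSpace ℝ (Fin q), ‖β - β0‖ ≤ 1 → ∀ σt : ℝ,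
      Integrable (fun ω => if |y 0 ω - f (x 0 ω) β| ≤ σt then (1:ℝ) else 0) P := by
    intro β hβ σt
    refine Integrable.mono' (integrable_const 1) (hZaesm β hβ σt) (ae_of_all _ fun ω => ?_)
    split_ifs <;> simp
  -- the key lemma : SLLN and mean formula for bracket indicators
  have key : ∀ a b : EuclideanSpace ℝ (Fin p) → ℝ, Measurable a → Measurable b →
      Integrable (fun ω => if a (x 0 ω) ≤ F0 (x 0 ω) + σ0 * ε 0 ω ∧
          F0 (x 0 ω) + σ0 * ε 0 ω ≤ b (x 0 ω) then (1:ℝ) else 0) P ∧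
      (∀ᵐ ω ∂P, Tendsto (fun n => (∑ i ∈ Finset.range n,
          (if a (x i ω) ≤ F0 (x i ω) + σ0 * ε i ω ∧
            F0 (x i ω) + σ0 * ε i ω ≤ b (x i ω) then (1:ℝ) else 0)) / n)
        atTop (nhds (∫ ω, (if a (x 0 ω) ≤ F0 (x 0 ω) + σ0 * ε 0 ω ∧
          F0 (x 0 ω) + σ0 * ε 0 ω ≤ b (x 0 ω) then (1:ℝ) else 0) ∂P))) ∧
      (∫ ω, (if a (x 0 ω) ≤ F0 (x 0 ω) + σ0 * ε 0 ω ∧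
          F0 (x 0 ω) + σ0 * ε 0 ω ≤ b (x 0 ω) then (1:ℝ) else 0) ∂P
        = ∫ xv, max (G0 ((b xv - F0 xv)/σ0) - G0 ((a xv - F0 xv)/σ0)) 0 ∂μx) := by
    intro a b ha hb
    set Φ : ℝ × EuclideanSpace ℝ (Fin p) → ℝ := fun pr =>
      if a pr.2 ≤ F0 pr.2 + σ0 * pr.1 ∧ F0 pr.2 + σ0 * pr.1 ≤ b pr.2 then 1 else 0 with hΦdef
    have hΦm : Measurable Φ := by
      refine Measurable.ite (MeasurableSet.inter ?_ ?_) measurable_const measurable_const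
      · exact measurableSet_le (ha.comp measurable_snd)
          ((hF0m.measurable.comp measurable_snd).add (measurable_const.mul measurable_fst))
      · exact measurableSet_le
          ((hF0m.measurable.comp measurable_snd).add (measurable_const.mul measurable_fst))
          (hb.comp measurable_snd)
    have hXm : ∀ i, Measurable (fun ω => Φ (ε i ω, x i ω)) :=
      fun i => hΦm.comp ((hε_meas i).prodMk (hx_meas i))
    have hXint : Integrable (fun ω => Φ (ε 0 ω, x 0 ω)) P := by
      refine Integrable.mono' (integrable_const 1) (hXm 0).aestronglyMeasurable
        (ae_of_all _ fun ω => ?_)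
      simp only [hΦdef]; split_ifs <;> simp
    refine ⟨hXint, ?_, ?_⟩
    · have hXindep : Pairwise (Function.onFun (IndepFun · · P) (fun i ω => Φ (ε i ω, x i ω))) := by
        intro i j hij
        exact (hindep.comp (fun _ => Φ) (fun _ => hΦm)).indepFun hij
      have hXident : ∀ i, IdentDistrib (fun ω => Φ (ε i ω, x i ω))
          (fun ω => Φ (ε 0 ω, x 0 ω)) P P := fun i => (hident i).comp hΦm
      exact strong_law_ae_real _ hXint hXindep hXident
    · have hpair : AEMeasurable (fun ω => (ε 0 ω, x 0 ω)) P :=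
        ((hε_meas 0).prodMk (hx_meas 0)).aemeasurable
      have hmapeq : P.map (fun ω => (ε 0 ω, x 0 ω)) = ν.prod μx :=
        (indepFun_iff_map_prod_eq_prod_map_map (hε_meas 0).aemeasurable
          (hx_meas 0).aemeasurable).1 (hεx 0)
      have h1 : ∫ ω, Φ (ε 0 ω, x 0 ω) ∂P = ∫ pr, Φ pr ∂(ν.prod μx) := by
        rw [← hmapeq, integral_map hpair hΦm.aestronglyMeasurable]
      have hΦint : Integrable Φ (ν.prod μx) := by
        refine Integrable.mono' (integrable_const 1) hΦm.aestronglyMeasurable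
          (ae_of_all _ fun pr => ?_)
        simp only [hΦdef]; split_ifs <;> simp
      have h2 : ∫ pr, Φ pr ∂(ν.prod μx) = ∫ xv, (∫ e, Φ (e, xv) ∂ν) ∂μx :=
        integral_prod_symm Φ hΦint
      have h3 : ∀ xv, (∫ e, Φ (e, xv) ∂ν)
          = max (G0 ((b xv - F0 xv)/σ0) - G0 ((a xv - F0 xv)/σ0)) 0 := by
        intro xv
        have hfun : (fun e => Φ (e, xv))
            = (Icc ((a xv - F0 xv)/σ0) ((b xv - F0 xv)/σ0)).indicator (fun _ => (1:ℝ)) := by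
          funext e
          rw [Set.indicator_apply]
          simp only [hΦdef, Set.mem_Icc]
          refine if_congr ?_ rfl rfl
          constructor
          · rintro ⟨hc1, hc2⟩
            constructor
            · rw [div_le_iff₀ hσ0]; linarith
            · rw [le_div_iff₀ hσ0]; linarith
          · rintro ⟨hc1, hc2⟩
            rw [div_le_iff₀ hσ0] at hc1
            rw [le_div_iff₀ hσ0] at hc2
            constructor <;> linarith
        rw [hfun, integral_indicator_const (1:ℝ) measurableSet_Icc, smul_eq_mul, mul_one,
          measureReal_def, hνIcc]
      rw [h1, h2]
      exact integral_congr_ae (ae_of_all _ h3)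
  -- the bracketing hypothesis of the abstract lemma
  have hH : ∀ δ : ℝ, 0 < δ → ∃ (ι : Type) (_ : Fintype ι) (L U : ι → ℕ → Ω → ℝ)
      (ML MU : ι → ℝ),
      (∀ j, ∀ᵐ ω ∂P, Tendsto (fun n => (∑ i ∈ Finset.range n, L j i ω) / n) atTop
        (nhds (ML j))) ∧
      (∀ j, ∀ᵐ ω ∂P, Tendsto (fun n => (∑ i ∈ Finset.range n, U j i ω) / n) atTop
        (nhds (MU j))) ∧
      (∀ᵐ ω ∂P, ∀ θ : {b : EuclideanSpace ℝ (Fin q) // ‖b - β0‖ ≤ 1} × (Icc (σ0/2) (2*σ0)),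
        ∃ j, (∀ i, L j i ω ≤ (if |y i ω - f (x i ω) (θ.1 : EuclideanSpace ℝ (Fin q))| ≤ (θ.2 : ℝ) * t
                then (1:ℝ) else 0) ∧
              (if |y i ω - f (x i ω) (θ.1 : EuclideanSpace ℝ (Fin q))| ≤ (θ.2 : ℝ) * t
                then (1:ℝ) else 0) ≤ U j i ω) ∧
          ML j ≤ (∫ ω', (if |y 0 ω' - f (x 0 ω') (θ.1 : EuclideanSpace ℝ (Fin q))| ≤ (θ.2 : ℝ) * t
              then (1:ℝ) else 0) ∂P) ∧
          (∫ ω', (if |y 0 ω' - f (x 0 ω') (θ.1 : EuclideanSpace ℝ (Fin q))| ≤ (θ.2 : ℝ) * t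
              then (1:ℝ) else 0) ∂P) ≤ MU j ∧ MU j - ML j ≤ δ) := by
    intro δ hδ
    obtain ⟨m, fL, fU, hbr, hcov⟩ := hC4_brack (δ * σ0 / (8 * (C + 1))) (by positivity)
    obtain ⟨FL, hFLm, hFLe⟩ : ∃ FL : Fin m → EuclideanSpace ℝ (Fin p) → ℝ,
        (∀ k, StronglyMeasurable (FL k)) ∧ ∀ k, (fL k) =ᵐ[μx] (FL k) := by
      choose FL h1 h2 using fun k => (hbr k).1.aestronglyMeasurable
      exact ⟨FL, h1, h2⟩
    obtain ⟨FU, hFUm, hFUe⟩ : ∃ FU : Fin m → EuclideanSpace ℝ (Fin p) → ℝ,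
        (∀ k, StronglyMeasurable (FU k)) ∧ ∀ k, (fU k) =ᵐ[μx] (FU k) := by
      choose FU h1 h2 using fun k => (hbr k).2.1.aestronglyMeasurable
      exact ⟨FU, h1, h2⟩
    set η : ℝ := δ * σ0 / (8 * (C + 1) * (t + 1)) with hηdef
    have hηpos : 0 < η := by positivity
    set Nσ : ℕ := ⌈(3 * σ0 / 2) / η⌉₊ with hNσdef
    set sg : Fin (Nσ + 1) → ℝ := fun l => σ0 / 2 + (l : ℕ) * η with hsgdef
    have hmaL : ∀ j : Fin m × Fin (Nσ + 1),
        Measurable (fun xv => FU j.1 xv - sg j.2 * t) :=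
      fun j => (hFUm j.1).measurable.sub measurable_const
    have hmbL : ∀ j : Fin m × Fin (Nσ + 1),
        Measurable (fun xv => FL j.1 xv + sg j.2 * t) :=
      fun j => (hFLm j.1).measurable.add measurable_const
    have hmaU : ∀ j : Fin m × Fin (Nσ + 1),
        Measurable (fun xv => FL j.1 xv - (sg j.2 + η) * t) :=
      fun j => (hFLm j.1).measurable.sub measurable_const
    have hmbU : ∀ j : Fin m × Fin (Nσ + 1),
        Measurable (fun xv => FU j.1 xv + (sg j.2 + η) * t) :=
      fun j => (hFUm j.1).measurable.add measurable_const
    refine ⟨Fin m × Fin (Nσ + 1), inferInstance,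
      (fun j i ω => if FU j.1 (x i ω) - sg j.2 * t ≤ F0 (x i ω) + σ0 * ε i ω ∧
          F0 (x i ω) + σ0 * ε i ω ≤ FL j.1 (x i ω) + sg j.2 * t then (1:ℝ) else 0),
      (fun j i ω => if FL j.1 (x i ω) - (sg j.2 + η) * t ≤ F0 (x i ω) + σ0 * ε i ω ∧
          F0 (x i ω) + σ0 * ε i ω ≤ FU j.1 (x i ω) + (sg j.2 + η) * t then (1:ℝ) else 0),
      (fun j => ∫ ω, (if FU j.1 (x 0 ω) - sg j.2 * t ≤ F0 (x 0 ω) + σ0 * ε 0 ω ∧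
          F0 (x 0 ω) + σ0 * ε 0 ω ≤ FL j.1 (x 0 ω) + sg j.2 * t then (1:ℝ) else 0) ∂P),
      (fun j => ∫ ω, (if FL j.1 (x 0 ω) - (sg j.2 + η) * t ≤ F0 (x 0 ω) + σ0 * ε 0 ω ∧
          F0 (x 0 ω) + σ0 * ε 0 ω ≤ FU j.1 (x 0 ω) + (sg j.2 + η) * t then (1:ℝ) else 0) ∂P),
      ?_, ?_, ?_⟩
    · intro j
      exact (key (fun xv => FU j.1 xv - sg j.2 * t) (fun xv => FL j.1 xv + sg j.2 * t)
        (hmaL j) (hmbL j)).2.1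
    · intro j
      exact (key (fun xv => FL j.1 xv - (sg j.2 + η) * t)
        (fun xv => FU j.1 xv + (sg j.2 + η) * t) (hmaU j) (hmbU j)).2.1
    · -- the bracketing property
      have haeq : ∀ᵐ ω ∂P, ∀ i, (∀ k : Fin m,
          FL k (x i ω) = fL k (x i ω) ∧ FU k (x i ω) = fU k (x i ω)) ∧
          F0 (x i ω) = f (x i ω) β0 := by
        rw [ae_all_iff]
        intro i
        have h1 : ∀ᵐ ω ∂P, ∀ k : Fin m, FL k (x i ω) = fL k (x i ω) :=
          ae_all_iff.2 (fun k => hpull _ _ (hFLe k).symm i)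
        have h2 : ∀ᵐ ω ∂P, ∀ k : Fin m, FU k (x i ω) = fU k (x i ω) :=
          ae_all_iff.2 (fun k => hpull _ _ (hFUe k).symm i)
        have h3 : ∀ᵐ ω ∂P, F0 (x i ω) = f (x i ω) β0 := hpull _ _ hF0e.symm i
        filter_upwards [h1, h2, h3] with ω e1 e2 e3
        exact ⟨fun k => ⟨e1 k, e2 k⟩, e3⟩
      filter_upwards [haeq] with ω hωeq
      rintro ⟨⟨β, hβ⟩, ⟨σ, hσ1, hσ2⟩⟩
      obtain ⟨k, hk⟩ := hcov β hβ
      have hσd : (0:ℝ) ≤ σ - σ0 / 2 := by linarith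
      set l0 : ℕ := ⌊(σ - σ0/2)/η⌋₊ with hl0def
      have hl0le : l0 ≤ Nσ := by
        refine le_trans (Nat.floor_mono ?_) (Nat.floor_le_ceil _)
        exact (div_le_div_iff_of_pos_right hηpos).2 (by linarith)
      set j : Fin m × Fin (Nσ + 1) := (k, ⟨l0, Nat.lt_succ_of_le hl0le⟩) with hjdef
      have hj1 : j.1 = k := rfl
      have hsgj : sg j.2 = σ0/2 + (l0:ℝ) * η := rfl
      have hsl : sg j.2 ≤ σ := by
        have h1 : ((l0:ℝ)) ≤ (σ - σ0/2)/η := Nat.floor_le (by positivity)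
        have h2 := (le_div_iff₀ hηpos).1 h1
        rw [hsgj]; linarith
      have hsu : σ ≤ sg j.2 + η := by
        have h1 : (σ - σ0/2)/η < l0 + 1 := Nat.lt_floor_add_one _
        have h2 := (div_lt_iff₀ hηpos).1 h1
        rw [hsgj]; nlinarith
      have habs : ∀ (cL cU cβ Y : ℝ), cL ≤ cβ → cβ ≤ cU →
          ((if cU - sg j.2 * t ≤ Y ∧ Y ≤ cL + sg j.2 * t then (1:ℝ) else 0)
            ≤ (if |Y - cβ| ≤ σ * t then (1:ℝ) else 0)) ∧
          ((if |Y - cβ| ≤ σ * t then (1:ℝ) else 0)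
            ≤ (if cL - (sg j.2 + η) * t ≤ Y ∧ Y ≤ cU + (sg j.2 + η) * t then (1:ℝ) else 0)) := by
        intro cL cU cβ Y h1 h2
        have hst : sg j.2 * t ≤ σ * t := mul_le_mul_of_nonneg_right hsl ht
        have hst2 : σ * t ≤ (sg j.2 + η) * t := mul_le_mul_of_nonneg_right hsu ht
        constructor
        · split_ifs with hc1 hc2
          · norm_num
          · exact absurd (abs_le.2 ⟨by linarith [hc1.1], by linarith [hc1.2]⟩) hc2
          · norm_num
          · norm_num
        · split_ifs with hc1 hc2
          · norm_num
          · have h3 := abs_le.1 hc1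
            exact absurd ⟨by linarith [h3.1], by linarith [h3.2]⟩ hc2
          · norm_num
          · norm_num
      refine ⟨j, ?_, ?_, ?_, ?_⟩
      · intro i
        obtain ⟨hkk, hf0⟩ := hωeq i
        obtain ⟨e1, e2⟩ := hkk k
        have hy : F0 (x i ω) + σ0 * ε i ω = y i ω := by rw [hf0, ← hmod i ω]
        have hb := habs (fL k (x i ω)) (fU k (x i ω)) (f (x i ω) β) (y i ω)
          (hk (x i ω)).1 (hk (x i ω)).2
        constructor
        · beta_reduce
          rw [e1, e2, hy]
          exact hb.1
        · beta_reduce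
          rw [e1, e2, hy]
          exact hb.2
      · -- lower mean bound
        have hLint := (key (fun xv => FU j.1 xv - sg j.2 * t)
          (fun xv => FL j.1 xv + sg j.2 * t) (hmaL j) (hmbL j)).1
        refine integral_mono_ae hLint (hZint β hβ (σ * t)) ?_
        filter_upwards [haeq] with ω' hω'
        obtain ⟨hkk, hf0⟩ := hω' 0
        obtain ⟨e1, e2⟩ := hkk k
        have hy : F0 (x 0 ω') + σ0 * ε 0 ω' = y 0 ω' := by rw [hf0, ← hmod 0 ω']
        have hb := habs (fL k (x 0 ω')) (fU k (x 0 ω')) (f (x 0 ω') β) (y 0 ω')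
          (hk (x 0 ω')).1 (hk (x 0 ω')).2
        beta_reduce
        rw [e1, e2, hy]
        exact hb.1
      · -- upper mean bound
        have hUint := (key (fun xv => FL j.1 xv - (sg j.2 + η) * t)
          (fun xv => FU j.1 xv + (sg j.2 + η) * t) (hmaU j) (hmbU j)).1
        refine integral_mono_ae (hZint β hβ (σ * t)) hUint ?_
        filter_upwards [haeq] with ω' hω'
        obtain ⟨hkk, hf0⟩ := hω' 0
        obtain ⟨e1, e2⟩ := hkk k
        have hy : F0 (x 0 ω') + σ0 * ε 0 ω' = y 0 ω' := by rw [hf0, ← hmod 0 ω']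
        have hb := habs (fL k (x 0 ω')) (fU k (x 0 ω')) (f (x 0 ω') β) (y 0 ω')
          (hk (x 0 ω')).1 (hk (x 0 ω')).2
        beta_reduce
        rw [e1, e2, hy]
        exact hb.2
      · -- the gap bound
        have hML := (key (fun xv => FU j.1 xv - sg j.2 * t)
          (fun xv => FL j.1 xv + sg j.2 * t) (hmaL j) (hmbL j)).2.2
        have hMU := (key (fun xv => FL j.1 xv - (sg j.2 + η) * t)
          (fun xv => FU j.1 xv + (sg j.2 + η) * t) (hmaU j) (hmbU j)).2.2
        beta_reduce
        beta_reduce at hML hMU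
        rw [hML, hMU]
        have hmaxfact : ∀ a b : ℝ, b ≤ a → max a 0 - max b 0 ≤ a - b := by
          intro a b h
          rcases max_cases a 0 with ⟨ha, _⟩ | ⟨ha, _⟩ <;>
            rcases max_cases b 0 with ⟨hb, _⟩ | ⟨hb, _⟩ <;> rw [ha, hb] <;> linarith
        have hGint : ∀ (a b : EuclideanSpace ℝ (Fin p) → ℝ), Measurable a → Measurable b →
            Integrable (fun xv => max (G0 ((b xv - F0 xv)/σ0) - G0 ((a xv - F0 xv)/σ0)) 0)
              μx := by
          intro a b hma hmb
          refine Integrable.mono' (integrable_const 1) ?_ (ae_of_all _ fun xv => ?_)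
          · apply Measurable.aestronglyMeasurable
            refine Measurable.max ?_ measurable_const
            refine Measurable.sub ?_ ?_
            · exact hG0_mono.measurable.comp ((hmb.sub hF0m.measurable).div_const σ0)
            · exact hG0_mono.measurable.comp ((hma.sub hF0m.measurable).div_const σ0)
          · rw [Real.norm_eq_abs, abs_of_nonneg (le_max_right _ _)]
            have hv1 := hG0_le_one ((b xv - F0 xv)/σ0)
            have hv2 := hG0_nonneg ((a xv - F0 xv)/σ0)
            exact max_le (by linarith) one_pos.le
        have hIU := hGint _ _ (hmaU j) (hmbU j)
        have hIL := hGint _ _ (hmaL j) (hmbL j)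
        beta_reduce at hIU hIL
        rw [← integral_sub hIU hIL]
        have hsubint : Integrable (fun xv => fU k xv - fL k xv) μx :=
          (hbr k).2.1.sub (hbr k).1
        have hfint : Integrable (fun xv => 2*C/σ0 * ((fU k xv - fL k xv) + η*t)) μx :=
          (hsubint.add (integrable_const (η*t))).const_mul _
        have hle2 : ∫ xv, (max (G0 ((FU j.1 xv + (sg j.2 + η) * t - F0 xv)/σ0)
              - G0 ((FL j.1 xv - (sg j.2 + η) * t - F0 xv)/σ0)) 0
            - max (G0 ((FL j.1 xv + sg j.2 * t - F0 xv)/σ0)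
              - G0 ((FU j.1 xv - sg j.2 * t - F0 xv)/σ0)) 0) ∂μx
            ≤ ∫ xv, 2*C/σ0 * ((fU k xv - fL k xv) + η*t) ∂μx := by
          refine integral_mono_ae (hIU.sub hIL) hfint ?_
          filter_upwards [hFLe k, hFUe k] with xv eL eU
          beta_reduce
          rw [← eL, ← eU]
          have hηt : (0:ℝ) ≤ η * t := mul_nonneg hηpos.le ht
          have h1 : (fL k xv + sg j.2 * t - F0 xv)/σ0
              ≤ (fU k xv + (sg j.2 + η) * t - F0 xv)/σ0 := by
            refine (div_le_div_iff_of_pos_right hσ0).2 ?_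
            have := le_trans (hk xv).1 (hk xv).2
            nlinarith
          have h1' : (fL k xv - (sg j.2 + η) * t - F0 xv)/σ0
              ≤ (fU k xv - sg j.2 * t - F0 xv)/σ0 := by
            refine (div_le_div_iff_of_pos_right hσ0).2 ?_
            have := le_trans (hk xv).1 (hk xv).2
            nlinarith
          have hL1 := hG0_lip _ _ h1
          have hL2 := hG0_lip _ _ h1'
          have h3 : (fU k xv + (sg j.2 + η) * t - F0 xv)/σ0
              - (fL k xv + sg j.2 * t - F0 xv)/σ0 = ((fU k xv - fL k xv) + η * t)/σ0 := by
            field_simp; ring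
          have h3' : (fU k xv - sg j.2 * t - F0 xv)/σ0
              - (fL k xv - (sg j.2 + η) * t - F0 xv)/σ0 = ((fU k xv - fL k xv) + η * t)/σ0 := by
            field_simp; ring
          rw [h3] at hL1
          rw [h3'] at hL2
          have hord : G0 ((fL k xv + sg j.2 * t - F0 xv)/σ0)
                - G0 ((fU k xv - sg j.2 * t - F0 xv)/σ0)
              ≤ G0 ((fU k xv + (sg j.2 + η) * t - F0 xv)/σ0)
                - G0 ((fL k xv - (sg j.2 + η) * t - F0 xv)/σ0) := by
            have hm1 := hG0_mono h1
            have hm2 := hG0_mono h1'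
            linarith
          have hmf := hmaxfact _ _ hord
          have hCdiv : C * (((fU k xv - fL k xv) + η * t)/σ0)
              + C * (((fU k xv - fL k xv) + η * t)/σ0)
              = 2*C/σ0 * ((fU k xv - fL k xv) + η * t) := by
            field_simp
            ring
          linarith
        refine le_trans hle2 ?_
        have hIconst : ∫ xv, 2*C/σ0 * ((fU k xv - fL k xv) + η*t) ∂μx
            = 2*C/σ0 * ((∫ xv, (fU k xv - fL k xv) ∂μx) + η*t) := by
          have h4 : ∫ xv, ((fU k xv - fL k xv) + η*t) ∂μx
              = (∫ xv, (fU k xv - fL k xv) ∂μx) + η*t := by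
            rw [integral_add hsubint (integrable_const (η*t)), integral_const]
            simp
          rw [integral_const_mul, h4]
        rw [hIconst]
        have hI := (hbr k).2.2
        have hηt2 : η * t ≤ δ*σ0/(8*(C+1)) := by
          have h1 : η * t = δ*σ0*t/(8*(C+1)*(t+1)) := by rw [hηdef]; ring
          rw [h1, div_le_div_iff₀ (by positivity) (by positivity)]
          nlinarith [mul_nonneg (mul_nonneg hδ.le hσ0.le) (by linarith : (0:ℝ) ≤ C + 1)]
        have hsum : (∫ xv, (fU k xv - fL k xv) ∂μx) + η*t ≤ δ*σ0/(4*(C+1)) := by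
          have hCne : C + 1 ≠ 0 := by positivity
          have he : δ*σ0/(8*(C+1)) + δ*σ0/(8*(C+1)) = δ*σ0/(4*(C+1)) := by
            field_simp
            ring
          linarith
        calc 2*C/σ0 * ((∫ xv, (fU k xv - fL k xv) ∂μx) + η*t)
            ≤ 2*C/σ0 * (δ*σ0/(4*(C+1))) :=
              mul_le_mul_of_nonneg_left hsum (by positivity)
          _ = δ * (C/(2*(C+1))) := by field_simp; ring
          _ ≤ δ := by
              refine mul_le_of_le_one_right hδ.le ?_
              rw [div_le_one (by positivity)]
              linarith
  have main := bracket_ulln P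
    (fun (θ : {b : EuclideanSpace ℝ (Fin q) // ‖b - β0‖ ≤ 1} × (Icc (σ0/2) (2*σ0))) i ω =>
      if |y i ω - f (x i ω) (θ.1 : EuclideanSpace ℝ (Fin q))| ≤ (θ.2 : ℝ) * t
        then (1:ℝ) else 0)
    (fun θ => ∫ ω', (if |y 0 ω' - f (x 0 ω') (θ.1 : EuclideanSpace ℝ (Fin q))| ≤ (θ.2 : ℝ) * t
        then (1:ℝ) else 0) ∂P) hH
  filter_upwards [main] with ω hω
  rw [Metric.tendsto_atTop]
  intro r hr
  obtain ⟨k, hk⟩ := exists_nat_one_div_lt hr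
  obtain ⟨N, hN⟩ := hω k
  refine ⟨N, fun n hn => ?_⟩
  rw [Real.dist_eq, sub_zero,
    abs_of_nonneg (Real.iSup_nonneg fun β => Real.iSup_nonneg fun σ => abs_nonneg _)]
  refine lt_of_le_of_lt ?_ hk
  refine Real.iSup_le (fun β => Real.iSup_le (fun σ => ?_) (by positivity)) (by positivity)
  exact hN n hn (β, σ)
end
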